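/- Let K be a positive integer and let v, u ∈ ℝ^K have the same support under ev-softmax, i.e., {k : v_k ≥ v̄} = {k : u_k ≥ ū}, where v̄ and ū denote the arithmetic means of v and u. Then ‖EvSoftmax(v) − EvSoftmax(u)‖₂ ≤ ‖v − u‖₂, where ‖·‖₂ is the Euclidean norm on ℝ^K; that is, ev-softmax is 1-Lipschitz on each set of inputs sharing a common support. -/

import Mathlib

open Finset

/-- The ev-softmax function:
`EvSoftmax(v)_k = 𝟙{v_k ≥ v̄} e^{v_k} / ∑_l 𝟙{v_l ≥ v̄} e^{v_l}`,
where `v̄` is the arithmetic mean of `v`. -/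
noncomputable def evSoftmax {K : ℕ} (v : Fin K → ℝ) (k : Fin K) : ℝ :=
  (if (∑ i : Fin K, v i) / K ≤ v k then Real.exp (v k) else 0) /
    ∑ l : Fin K, (if (∑ i : Fin K, v i) / K ≤ v l then Real.exp (v l) else 0)

namespace EvSoftmaxAux

noncomputable section


variable {K : ℕ}

abbrev E (K : ℕ) := EuclideanSpace ℝ (Fin K)

/-- softmax restricted to a subset `S` of coordinates. -/
def smS (S : Finset (Fin K)) (x : E K) : E K :=
  WithLp.toLp 2 (fun k => if k ∈ S then Real.exp (x k) / ∑ l ∈ S, Real.exp (x l) else 0)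


def Lmap (S : Finset (Fin K)) (x : E K) : E K →L[ℝ] E K :=
  ((PiLp.continuousLinearEquiv 2 ℝ fun _ : Fin K => ℝ).symm.toContinuousLinearMap).comp
    (ContinuousLinearMap.pi fun k => if k ∈ S then
      (Real.exp (x k) / ∑ l ∈ S, Real.exp (x l)) •
        (EuclideanSpace.proj k - ∑ l ∈ S, (Real.exp (x l) / ∑ m ∈ S, Real.exp (x m)) • EuclideanSpace.proj l)
      else 0)


lemma hasFDerivAt_smS (S : Finset (Fin K)) (hS : S.Nonempty) (x : E K) :
    HasFDerivAt (smS S) (Lmap S x) x := by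
  have hDpos : 0 < ∑ l ∈ S, Real.exp (x l) :=
    Finset.sum_pos (fun _ _ => Real.exp_pos _) hS
  have heval : ∀ k : Fin K, HasFDerivAt (fun y : E K => y k)
      (EuclideanSpace.proj k : E K →L[ℝ] ℝ) x := fun k =>
    (EuclideanSpace.proj k : E K →L[ℝ] ℝ).hasFDerivAt
  have hexp : ∀ k : Fin K, HasFDerivAt (fun y : E K => Real.exp (y k))
      (Real.exp (x k) • (EuclideanSpace.proj k : E K →L[ℝ] ℝ)) x := fun k => (heval k).exp
  have hD : HasFDerivAt (fun y : E K => ∑ l ∈ S, Real.exp (y l))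
      (∑ l ∈ S, Real.exp (x l) • (EuclideanSpace.proj l : E K →L[ℝ] ℝ)) x :=
    HasFDerivAt.fun_sum fun l _ => hexp l
  have hinv : HasFDerivAt (fun y : E K => (∑ l ∈ S, Real.exp (y l))⁻¹)
      ((-((∑ l ∈ S, Real.exp (x l)) ^ 2)⁻¹) •
        ∑ l ∈ S, Real.exp (x l) • (EuclideanSpace.proj l : E K →L[ℝ] ℝ)) x :=
    (hasDerivAt_inv hDpos.ne').comp_hasFDerivAt x hD
  have hg0 : HasFDerivAt
      (fun (y : E K) (k : Fin K) => if k ∈ S then Real.exp (y k) / ∑ l ∈ S, Real.exp (y l) else 0)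
      (ContinuousLinearMap.pi fun k => if k ∈ S then
        (Real.exp (x k) / ∑ l ∈ S, Real.exp (x l)) •
          ((EuclideanSpace.proj k : E K →L[ℝ] ℝ) - ∑ l ∈ S,
            (Real.exp (x l) / ∑ m ∈ S, Real.exp (x m)) • (EuclideanSpace.proj l : E K →L[ℝ] ℝ))
        else 0) x := by
    refine hasFDerivAt_pi.2 fun k => ?_
    by_cases hk : k ∈ S
    · simp only [hk, if_true]
      have h1 := (hexp k).fun_mul hinv
      have heq : (fun y : E K => Real.exp (y k) * (∑ l ∈ S, Real.exp (y l))⁻¹)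
          = fun y : E K => Real.exp (y k) / ∑ l ∈ S, Real.exp (y l) := by
        funext y; rw [div_eq_mul_inv]
      rw [heq] at h1
      refine h1.congr_fderiv ?_
      ext w
      simp only [ContinuousLinearMap.smul_apply, ContinuousLinearMap.sub_apply,
        ContinuousLinearMap.sum_apply, ContinuousLinearMap.add_apply,
        smul_eq_mul, PiLp.proj_apply]
      have hD0 : (∑ l ∈ S, Real.exp (x l)) ≠ 0 := hDpos.ne'
      simp only [div_mul_eq_mul_div, ← Finset.sum_div]
      field_simp
      ring
    · simp only [hk, if_false]
      exact hasFDerivAt_const 0 x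
  exact ((PiLp.continuousLinearEquiv 2 ℝ fun _ : Fin K => ℝ).symm.hasFDerivAt).comp x hg0

lemma key_ineq (S : Finset (Fin K)) (p w : Fin K → ℝ)
    (hp0 : ∀ k ∈ S, 0 ≤ p k) (hp1 : ∀ k ∈ S, p k ≤ 1) (hsum : ∑ k ∈ S, p k = 1) :
    ∑ k ∈ S, (p k * (w k - ∑ l ∈ S, p l * w l)) ^ 2 ≤ ∑ k ∈ S, w k ^ 2 := by
  set c := ∑ l ∈ S, p l * w l with hc
  have h1 : ∑ k ∈ S, (p k * (w k - c)) ^ 2 ≤ ∑ k ∈ S, p k * (w k - c) ^ 2 :=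
    Finset.sum_le_sum fun k hk => by
      nlinarith [mul_nonneg (mul_nonneg (hp0 k hk) (sub_nonneg.2 (hp1 k hk)))
        (sq_nonneg (w k - c)), sq_nonneg (w k - c)]
  have h2 : ∑ k ∈ S, p k * (w k - c) ^ 2 = ∑ k ∈ S, p k * w k ^ 2 - c ^ 2 := by
    have e : ∀ k ∈ S, p k * (w k - c) ^ 2
        = p k * w k ^ 2 - 2 * c * (p k * w k) + c ^ 2 * p k := fun k _ => by ring
    rw [Finset.sum_congr rfl e, Finset.sum_add_distrib, Finset.sum_sub_distrib,
      ← Finset.mul_sum, ← Finset.mul_sum, ← hc, hsum]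
    ring
  have h3 : ∑ k ∈ S, p k * w k ^ 2 ≤ ∑ k ∈ S, w k ^ 2 :=
    Finset.sum_le_sum fun k hk => mul_le_of_le_one_left (sq_nonneg _) (hp1 k hk)
  nlinarith [sq_nonneg c]

lemma norm_Lmap_le (S : Finset (Fin K)) (hS : S.Nonempty) (x : E K) : ‖Lmap S x‖ ≤ 1 := by
  have hDpos : 0 < ∑ l ∈ S, Real.exp (x l) :=
    Finset.sum_pos (fun _ _ => Real.exp_pos _) hS
  refine ContinuousLinearMap.opNorm_le_bound _ zero_le_one fun w => ?_
  rw [one_mul]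
  have happly : ∀ k, Lmap S x w k = if k ∈ S then
      (Real.exp (x k) / ∑ l ∈ S, Real.exp (x l)) *
        (w k - ∑ l ∈ S, (Real.exp (x l) / ∑ m ∈ S, Real.exp (x m)) * w l) else 0 := fun k => by
    by_cases hk : k ∈ S
    · simp [Lmap, hk, ContinuousLinearMap.sum_apply, sub_eq_add_neg, mul_comm]
      ring
    · simp [Lmap, hk]
  rw [EuclideanSpace.norm_eq, EuclideanSpace.norm_eq]
  apply Real.sqrt_le_sqrt
  simp only [Real.norm_eq_abs, sq_abs]
  have hstep : ∑ k : Fin K, (Lmap S x w k) ^ 2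
      = ∑ k ∈ S, ((Real.exp (x k) / ∑ l ∈ S, Real.exp (x l)) *
          (w k - ∑ l ∈ S, (Real.exp (x l) / ∑ m ∈ S, Real.exp (x m)) * w l)) ^ 2 := by
    rw [← Finset.sum_subset (Finset.subset_univ S) (fun k _ hk => by simp [happly k, hk])]
    exact Finset.sum_congr rfl fun k hk => by simp [happly k, hk]
  rw [hstep]
  have hkey := key_ineq S (fun k => Real.exp (x k) / ∑ l ∈ S, Real.exp (x l)) (fun k => w k)
    (fun k _ => div_nonneg (Real.exp_pos _).le hDpos.le)
    (fun k hk => by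
      rw [div_le_one hDpos]
      exact Finset.single_le_sum (fun i _ => (Real.exp_pos (x i)).le) hk)
    (by rw [← Finset.sum_div, div_self hDpos.ne'])
  refine le_trans hkey ?_
  exact Finset.sum_le_sum_of_subset_of_nonneg (Finset.subset_univ S)
    (fun k _ _ => sq_nonneg _)

lemma smS_lip (S : Finset (Fin K)) (hS : S.Nonempty) (a b : E K) :
    ‖smS S a - smS S b‖ ≤ ‖a - b‖ := by
  have := convex_univ.norm_image_sub_le_of_norm_hasFDerivWithin_le (f := smS S)
    (f' := Lmap S) (fun y _ => (hasFDerivAt_smS S hS y).hasFDerivWithinAt)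
    (fun y _ => norm_Lmap_le S hS y) (Set.mem_univ b) (Set.mem_univ a)
  simpa using this

end

end EvSoftmaxAux

open EvSoftmaxAux in
/-- If `v, u ∈ ℝ^K` have the same ev-softmax support, i.e.
`{k : v k ≥ v̄} = {k : u k ≥ ū}`, then
`‖EvSoftmax(v) - EvSoftmax(u)‖₂ ≤ ‖v - u‖₂` (Euclidean norm):
ev-softmax is 1-Lipschitz on each set of inputs sharing a common support. -/
theorem evSoftmax_lipschitz_on_common_support
    (K : ℕ) (hK : 0 < K) (v u : Fin K → ℝ)
    (hsupp : {k : Fin K | (∑ i : Fin K, v i) / K ≤ v k}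
           = {k : Fin K | (∑ i : Fin K, u i) / K ≤ u k}) :
    Real.sqrt (∑ k : Fin K, (evSoftmax v k - evSoftmax u k) ^ 2)
      ≤ Real.sqrt (∑ k : Fin K, (v k - u k) ^ 2) := by
  classical
  set S : Finset (Fin K) := Finset.univ.filter (fun k => (∑ i : Fin K, v i) / K ≤ v k)
    with hSdef
  have hcond : ∀ k, ((∑ i : Fin K, v i) / K ≤ v k) ↔ ((∑ i : Fin K, u i) / K ≤ u k) :=
    fun k => Set.ext_iff.mp hsupp k
  have hmemS : ∀ k, k ∈ S ↔ (∑ i : Fin K, v i) / K ≤ v k := fun k => by simp [hSdef]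
  have hmemSu : ∀ k, k ∈ S ↔ (∑ i : Fin K, u i) / K ≤ u k :=
    fun k => (hmemS k).trans (hcond k)
  have hS : S.Nonempty := by
    have hne : Nonempty (Fin K) := ⟨⟨0, hK⟩⟩
    obtain ⟨k, -, hk⟩ := Finset.exists_le_of_sum_le (Finset.univ_nonempty)
      (show ∑ _i : Fin K, (∑ i : Fin K, v i) / K ≤ ∑ i : Fin K, v i by
        rw [Finset.sum_const, Finset.card_univ, Fintype.card_fin, nsmul_eq_mul]
        have hK' : (K : ℝ) ≠ 0 := Nat.cast_ne_zero.mpr hK.ne'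
        field_simp
        exact le_rfl)
    exact ⟨k, (hmemS k).mpr hk⟩
  set V : E K := (WithLp.equiv 2 (Fin K → ℝ)).symm v with hV
  set U : E K := (WithLp.equiv 2 (Fin K → ℝ)).symm u with hU
  have hVk : ∀ k, V k = v k := fun _ => rfl
  have hUk : ∀ k, U k = u k := fun _ => rfl
  have hev_v : ∀ k, evSoftmax v k = smS S V k := fun k => by
    have hden : (∑ l : Fin K, if (∑ i : Fin K, v i) / K ≤ v l then Real.exp (v l) else 0)
        = ∑ l ∈ S, Real.exp (v l) := by
      rw [hSdef, Finset.sum_filter]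
    by_cases hk : k ∈ S
    · have hk' := (hmemS k).mp hk
      simp only [evSoftmax, smS, hden, hk, hk', if_true, hVk, PiLp.toLp_apply]
    · have hk' : ¬ (∑ i : Fin K, v i) / K ≤ v k := fun h => hk ((hmemS k).mpr h)
      simp only [evSoftmax, smS, hden, hk, hk', if_false, zero_div, PiLp.toLp_apply]
  have hev_u : ∀ k, evSoftmax u k = smS S U k := fun k => by
    have hden : (∑ l : Fin K, if (∑ i : Fin K, u i) / K ≤ u l then Real.exp (u l) else 0)
        = ∑ l ∈ S, Real.exp (u l) := by
      have : S = Finset.univ.filter (fun k => (∑ i : Fin K, u i) / K ≤ u k) := by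
        ext k; simp [hmemSu k]
      rw [this, Finset.sum_filter]
    by_cases hk : k ∈ S
    · have hk' := (hmemSu k).mp hk
      simp only [evSoftmax, smS, hden, hk, hk', if_true, hUk, PiLp.toLp_apply]
    · have hk' : ¬ (∑ i : Fin K, u i) / K ≤ u k := fun h => hk ((hmemSu k).mpr h)
      simp only [evSoftmax, smS, hden, hk, hk', if_false, zero_div, PiLp.toLp_apply]
  have h1 : Real.sqrt (∑ k : Fin K, (evSoftmax v k - evSoftmax u k) ^ 2)
      = ‖smS S V - smS S U‖ := by
    rw [EuclideanSpace.norm_eq]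
    congr 1
    refine Finset.sum_congr rfl fun k _ => ?_
    rw [hev_v k, hev_u k]
    simp [Real.norm_eq_abs, sq_abs]
  have h2 : Real.sqrt (∑ k : Fin K, (v k - u k) ^ 2) = ‖V - U‖ := by
    rw [EuclideanSpace.norm_eq]
    congr 1
    refine Finset.sum_congr rfl fun k _ => ?_
    simp [Real.norm_eq_abs, sq_abs, hVk, hUk]
  rw [h1, h2]
  exact smS_lip S hS V U
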